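/- arXiv:2104.09812 — 2 statements merged into one kernel-verified Lean document; each statement's English description precedes it below -/
import Mathlib

section
/- Let g(u) = u² − 2au + λ|u|^α with a ≠ 0, λ ≥ 0, and 0 < α < 1, and let c_α = (2/(2−α)) · { 2(1−α)/(2−α) }^{1−α}. Then 0 is the unique global minimizer of g over ℝ if and only if λ > c_α |a|^{2−α}. -/
open Real

lemma key_ineq {α A t : ℝ} (hα0 : 0 < α) (hα1 : α < 1) (hA : 0 < A) (ht : 0 < t) :
    2 * A * t - t ^ 2 ≤ (2 / (2 - α)) * (2 * (1 - α) / (2 - α)) ^ (1 - α) * A ^ (2 - α) * t ^ α := by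
  have h1α : (0:ℝ) < 1 - α := by linarith
  have h2α : (0:ℝ) < 2 - α := by linarith
  set p := (2 - α) / (1 - α) with hp
  have hp1 : 1 < p := by rw [hp, lt_div_iff₀ h1α]; linarith
  have hppos : 0 < p := zero_lt_one.trans hp1
  have hpq : Real.HolderConjugate p (2 - α) := (Real.holderConjugate_iff_eq_conjExponent hp1).mpr (by rw [hp]; field_simp; ring)
  set c := p ^ ((1 - α) / (2 - α)) with hc
  have hcpos : 0 < c := Real.rpow_pos_of_pos hppos _
  have young := Real.young_inequality_of_nonneg
    (a := c * t ^ (1 - α)) (b := 2 * A / c) (by positivity) (by positivity) hpq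
  have e1 : (c * t ^ (1 - α)) * (2 * A / c) = 2 * A * t ^ (1 - α) := by
    field_simp
  have ecp : c ^ p = p := by
    rw [hc, ← Real.rpow_mul hppos.le,
      show (1 - α) / (2 - α) * p = 1 by rw [hp]; field_simp, Real.rpow_one]
  have e2 : (c * t ^ (1 - α)) ^ p = p * t ^ (2 - α) := by
    rw [Real.mul_rpow hcpos.le (by positivity), ecp, ← Real.rpow_mul ht.le,
      show (1 - α) * p = 2 - α by rw [hp]; field_simp]
  have ecq : c ^ (2 - α) = p ^ (1 - α) := by
    rw [hc, ← Real.rpow_mul hppos.le,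
      show (1 - α) / (2 - α) * (2 - α) = 1 - α by field_simp]
  have e3 : (2 * A / c) ^ (2 - α) = 2 * 2 ^ (1 - α) / p ^ (1 - α) * A ^ (2 - α) := by
    rw [Real.div_rpow (by positivity) hcpos.le, Real.mul_rpow (by norm_num) hA.le, ecq]
    have : (2:ℝ) ^ (2 - α) = 2 * 2 ^ (1 - α) := by
      rw [show (2:ℝ) - α = 1 + (1 - α) by ring, Real.rpow_add (by norm_num), Real.rpow_one]
    rw [this]; ring
  rw [e1, e2, e3, mul_div_cancel_left₀ _ hppos.ne'] at young
  -- young : 2*A*t^(1-α) ≤ t^(2-α) + (2 * 2^(1-α) / p^(1-α) * A^(2-α)) / (2-α)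
  have ecα : (2 / (2 - α)) * (2 * (1 - α) / (2 - α)) ^ (1 - α)
      = (2 * 2 ^ (1 - α) / p ^ (1 - α)) / (2 - α) := by
    have h2p : 2 * (1 - α) / (2 - α) = 2 / p := by rw [hp]; field_simp
    rw [h2p, Real.div_rpow (by norm_num) hppos.le]; ring
  have m1 : t ^ (1 - α) * t ^ α = t := by
    rw [← Real.rpow_add ht]; norm_num
  have m2 : t ^ (2 - α) * t ^ α = t ^ 2 := by
    rw [← Real.rpow_add ht, show (2:ℝ) - α + α = 2 by ring, Real.rpow_two, sq]
  have htα : 0 < t ^ α := Real.rpow_pos_of_pos ht α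
  have final := mul_le_mul_of_nonneg_right young htα.le
  have h5 : 2 * A * t ^ (1 - α) * t ^ α = 2 * A * t := by rw [mul_assoc, m1]
  have h6 : (t ^ (2 - α) + 2 * 2 ^ (1 - α) / p ^ (1 - α) * A ^ (2 - α) / (2 - α)) * t ^ α
      = t ^ 2 + (2 * 2 ^ (1 - α) / p ^ (1 - α) / (2 - α)) * A ^ (2 - α) * t ^ α := by
    rw [add_mul, m2]; ring
  rw [h5, h6] at final
  rw [ecα]
  linarith


/-- Let `g(u) = u² − 2au + λ|u|^α` with `a ≠ 0`, `λ ≥ 0`, `0 < α < 1`,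
and let `c_α = (2/(2−α)) · (2(1−α)/(2−α))^{1−α}`.  Then `0` is the unique global minimizer
of `g` on `ℝ` if and only if `λ > c_α |a|^{2−α}`. -/
theorem bridge_univariate_argmin_zero_iff
    (a lam α : ℝ) (ha : a ≠ 0) (hlam : 0 ≤ lam) (hα0 : 0 < α) (hα1 : α < 1)
    (g : ℝ → ℝ) (hg : ∀ u : ℝ, g u = u ^ 2 - 2 * a * u + lam * |u| ^ α)
    (cα : ℝ) (hcα : cα = (2 / (2 - α)) * (2 * (1 - α) / (2 - α)) ^ (1 - α)) :
    (∀ u : ℝ, u ≠ 0 → g 0 < g u) ↔ cα * |a| ^ (2 - α) < lam := by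
  have h1α : (0:ℝ) < 1 - α := by linarith
  have h2α : (0:ℝ) < 2 - α := by linarith
  have habs : 0 < |a| := abs_pos.mpr ha
  have hg0 : g 0 = 0 := by
    rw [hg]; simp [Real.zero_rpow hα0.ne']
  constructor
  · intro H
    set k : ℝ := 2 * (1 - α) / (2 - α) with hk
    have hkpos : 0 < k := by positivity
    have hu := H (k * a) (mul_ne_zero hkpos.ne' ha)
    rw [hg0, hg] at hu
    have habs' : |k * a| = k * |a| := by rw [abs_mul, abs_of_pos hkpos]
    have hrp : |k * a| ^ α = k ^ α * |a| ^ α := by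
      rw [habs', Real.mul_rpow hkpos.le (abs_nonneg a)]
    have hck : cα * k ^ α = 2 * k - k ^ 2 := by
      have h1 : cα * k ^ α = (2 / (2 - α)) * k := by
        rw [hcα, mul_assoc, ← Real.rpow_add hkpos]
        norm_num
      have h2 : (2 / (2 - α)) * k = 2 * k - k ^ 2 := by
        rw [hk]; field_simp; ring
      rw [h1, h2]
    have hA2 : |a| ^ (2 - α) * |a| ^ α = |a| ^ 2 := by
      rw [← Real.rpow_add habs, show (2:ℝ) - α + α = 2 by ring, Real.rpow_two, sq]
    have hX : 0 < k ^ α * |a| ^ α := by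
      have := Real.rpow_pos_of_pos hkpos α
      have := Real.rpow_pos_of_pos habs α
      positivity
    have hsq : a ^ 2 = |a| ^ 2 := (sq_abs a).symm
    have hkey : cα * |a| ^ (2 - α) * (k ^ α * |a| ^ α) = (2 * k - k ^ 2) * |a| ^ 2 := by
      calc cα * |a| ^ (2 - α) * (k ^ α * |a| ^ α)
          = (cα * k ^ α) * (|a| ^ (2 - α) * |a| ^ α) := by ring
        _ = (2 * k - k ^ 2) * |a| ^ 2 := by rw [hck, hA2]
    rw [hrp] at hu
    have hu' : (2 * k - k ^ 2) * |a| ^ 2 < lam * (k ^ α * |a| ^ α) := by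
      nlinarith [hu, hsq]
    have hlt : cα * |a| ^ (2 - α) * (k ^ α * |a| ^ α) < lam * (k ^ α * |a| ^ α) := by
      rw [hkey]; exact hu'
    exact lt_of_mul_lt_mul_right hlt hX.le
  · intro hlt u hu0
    rw [hg0, hg]
    have htpos : 0 < |u| := abs_pos.mpr hu0
    have hrnn : 0 ≤ lam * |u| ^ α := by positivity
    have husq : 0 < u ^ 2 := pow_pos (abs_pos.mpr hu0) 2 |>.trans_eq (sq_abs u) |>.trans_le le_rfl
    rcases le_or_gt (a * u) 0 with hau | hau
    · nlinarith [husq, hrnn]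
    · have hau' : a * u = |a| * |u| := by
        rw [← abs_mul]; exact (abs_of_pos hau).symm
      have hk := key_ineq hα0 hα1 habs htpos
      have hstrict : cα * |a| ^ (2 - α) * |u| ^ α < lam * |u| ^ α :=
        mul_lt_mul_of_pos_right hlt (Real.rpow_pos_of_pos htpos α)
      have husq' : u ^ 2 = |u| ^ 2 := (sq_abs u).symm
      rw [hcα] at hstrict
      nlinarith [hk, hstrict, hau', husq']
end

section
/- Fix j and a realization with V_j = n⁻¹ Σ_{i=1}^n W_{ij}² − σ_j² > 0 and εᵀ a_j + n ξ_{nj} ≠ 0, and suppose λ_n > 0 and 0 < α < 1. Then 0 is the unique global minimizer of the univariate function h_j(β) = V_j β² − (2/n)(εᵀ a_j + n ξ_{nj}) β + λ_n |β|^α if and only if φ_n > n^{−1/2} V_j^{(α−1)/(2−α)} |εᵀ a_j + n ξ_{nj}|, where φ_n = c_α^{−1/(2−α)} λ_n^{1/(2−α)} n^{1/2} and c_α = (2/(2−α)) · { 2(1−α)/(2−α) }^{1−α}. -/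
open Finset

/-- Bernoulli-type inequality: for `0 < α < 1` and `u > 0`,
`2 - α ≤ (1-α) u + u^(α-1)`. -/
private lemma bern_aux {α u : ℝ} (hα0 : 0 < α) (hα1 : α < 1) (hu : 0 < u) :
    2 - α ≤ (1 - α) * u + u ^ (α - 1) := by
  have h1a : (0:ℝ) < 1 - α := by linarith
  have hgm : u ^ (1 - α) * (1:ℝ) ^ α ≤ (1 - α) * u + α * 1 :=
    Real.geom_mean_le_arith_mean2_weighted h1a.le hα0.le hu.le zero_le_one (by ring)
  have hpow_pos : 0 < u ^ (1 - α) := Real.rpow_pos_of_pos hu _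
  have hv : (0:ℝ) < (1 - α) * u + α := by positivity
  have hgm' : u ^ (1 - α) ≤ (1 - α) * u + α := by simpa using hgm
  have hinv : ((1 - α) * u + α)⁻¹ ≤ u ^ (α - 1) := by
    rw [show α - 1 = -(1 - α) by ring, Real.rpow_neg hu.le]
    exact inv_anti₀ hpow_pos hgm'
  set v := (1 - α) * u + α with hvdef
  have h2 : 2 ≤ v + v⁻¹ := by
    have h3 : (0:ℝ) ≤ (v - 1) ^ 2 / v := div_nonneg (sq_nonneg _) hv.le
    have h4 : v + v⁻¹ - 2 = (v - 1) ^ 2 / v := by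
      field_simp
      ring
    linarith
  have : (1 - α) * u = v - α := by rw [hvdef]; ring
  linarith

set_option maxHeartbeats 1000000 in
theorem pmsc_marginal_zero_iff_threshold
    (n p s : ℕ) (hn : 0 < n) (hs : s ≤ p)
    (X U : Matrix (Fin n) (Fin p) ℝ) (β₀ : Fin p → ℝ) (ε : Fin n → ℝ)
    (σu2 : Fin p → ℝ) (j : Fin p) (lam α : ℝ)
    (hlam : 0 < lam) (hα0 : 0 < α) (hα1 : α < 1)
    (W : Matrix (Fin n) (Fin p) ℝ) (hW : W = X + U)
    (ξj : ℝ)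
    (hξj : ξj = (n : ℝ)⁻¹ *
      ∑ i, (∑ k ∈ univ.filter (fun k : Fin p => (k : ℕ) < s), X i k * β₀ k) * W i j)
    (A : ℝ) (hA : A = (∑ i, ε i * W i j) + n * ξj) (hAne : A ≠ 0)
    (Vj : ℝ) (hVj : Vj = (n : ℝ)⁻¹ * ∑ i, W i j ^ 2 - σu2 j) (hVpos : 0 < Vj)
    (h : ℝ → ℝ)
    (hh : ∀ β : ℝ, h β = Vj * β ^ 2 - 2 / (n : ℝ) * A * β + lam * |β| ^ α)
    (cα : ℝ) (hcα : cα = (2 / (2 - α)) * (2 * (1 - α) / (2 - α)) ^ (1 - α))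
    (φ : ℝ) (hφ : φ = cα ^ (-(1 / (2 - α))) * lam ^ (1 / (2 - α)) * Real.sqrt n) :
    (∀ β : ℝ, β ≠ 0 → h 0 < h β) ↔
      (Real.sqrt n)⁻¹ * Vj ^ ((α - 1) / (2 - α)) * |A| < φ := by
  have hnR : (0:ℝ) < n := by exact_mod_cast hn
  have h2a : (0:ℝ) < 2 - α := by linarith
  have h1a : (0:ℝ) < 1 - α := by linarith
  set e1 : ℝ := (1 - α) / (2 - α) with he1
  set e2 : ℝ := 1 / (2 - α) with he2
  set e3 : ℝ := (α - 1) / (2 - α) with he3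
  -- the minimizer of t ↦ Vj t + lam t^(α-1)
  have hr : (0:ℝ) < lam * (1 - α) / Vj := by positivity
  set T : ℝ := (lam * (1 - α) / Vj) ^ e2 with hT
  have hTpos : 0 < T := Real.rpow_pos_of_pos hr _
  have hT2a : T ^ (2 - α) = lam * (1 - α) / Vj := by
    rw [hT, ← Real.rpow_mul hr.le,
      show e2 * (2 - α) = 1 by rw [he2]; field_simp, Real.rpow_one]
  -- first-order condition
  have hE1 : Vj * T = (1 - α) * (lam * T ^ (α - 1)) := by
    have h1 : T ^ (α - 1) * T ^ (2 - α) = T := by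
      rw [← Real.rpow_add hTpos, show α - 1 + (2 - α) = 1 by ring, Real.rpow_one]
    have h2 : Vj * (T ^ (α - 1) * T ^ (2 - α)) = (1 - α) * (lam * T ^ (α - 1)) := by
      rw [hT2a]
      field_simp
    rw [h1] at h2
    exact h2
  set c : ℝ := lam * T ^ (α - 1) with hc
  have hcpos : 0 < c := by
    have := Real.rpow_pos_of_pos hTpos (α - 1); positivity
  -- value at the minimizer
  have hval : Vj * T + lam * T ^ (α - 1) = (2 - α) * c := by
    rw [hE1, ← hc]; ring
  -- lower bound
  have hlow : ∀ t : ℝ, 0 < t → (2 - α) * c ≤ Vj * t + lam * t ^ (α - 1) := by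
    intro t ht
    set u : ℝ := t / T with hu
    have hupos : 0 < u := by positivity
    have htu : t = u * T := by rw [hu]; field_simp
    have hb := bern_aux hα0 hα1 hupos
    have et1 : Vj * t = (1 - α) * c * u := by
      rw [htu, show Vj * (u * T) = (Vj * T) * u by ring, hE1]
    have et2 : lam * t ^ (α - 1) = u ^ (α - 1) * c := by
      rw [htu, Real.mul_rpow hupos.le hTpos.le, hc]; ring
    have hmb : (2 - α) * c ≤ ((1 - α) * u + u ^ (α - 1)) * c :=
      mul_le_mul_of_nonneg_right hb hcpos.le
    calc (2 - α) * c ≤ ((1 - α) * u + u ^ (α - 1)) * c := hmb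
      _ = (1 - α) * c * u + u ^ (α - 1) * c := by ring
      _ = Vj * t + lam * t ^ (α - 1) := by rw [← et1, ← et2]
  -- closed form for c
  have hCF : c = (1 - α) ^ e3 * lam ^ e2 * Vj ^ e1 := by
    have hVe : Vj ^ e3 = (Vj ^ e1)⁻¹ := by
      rw [show e3 = -e1 by rw [he1, he3]; ring, Real.rpow_neg hVpos.le]
    have hTe : T ^ (α - 1) = lam ^ e3 * (1 - α) ^ e3 / Vj ^ e3 := by
      rw [hT, ← Real.rpow_mul hr.le, show e2 * (α - 1) = e3 by rw [he2, he3]; ring,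
        Real.div_rpow (by positivity) hVpos.le, Real.mul_rpow hlam.le h1a.le]
    have hll : lam * lam ^ e3 = lam ^ e2 := by
      rw [show e2 = 1 + e3 by rw [he2, he3]; field_simp; ring,
        Real.rpow_add hlam, Real.rpow_one]
    rw [hc, hTe, hVe, div_inv_eq_mul, ← hll]
    ring
  -- the constant D
  set D : ℝ := ((2 - α) / 2) * (1 - α) ^ e3 with hD
  have hDpos : 0 < D := by
    have := Real.rpow_pos_of_pos h1a e3; positivity
  have hcD : cα = D ^ (-(2 - α)) := by
    have h1 : ((1 - α) ^ e3 : ℝ) ^ (-(2 - α)) = (1 - α) ^ (1 - α) := by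
      rw [← Real.rpow_mul h1a.le, show e3 * (-(2 - α)) = 1 - α by rw [he3]; field_simp; ring]
    have h2 : (((2 - α) / 2 : ℝ)) ^ (-(2 - α)) = (2 / (2 - α)) ^ (2 - α) := by
      rw [Real.rpow_neg (by positivity), ← Real.inv_rpow (by positivity), inv_div]
    rw [hD, Real.mul_rpow (by positivity) (by positivity), h1, h2, hcα,
      show (2:ℝ) * (1 - α) / (2 - α) = (2 / (2 - α)) * (1 - α) by ring,
      Real.mul_rpow (by positivity) h1a.le,
      show (2:ℝ) - α = 1 + (1 - α) by ring,
      Real.rpow_add (by positivity), Real.rpow_one]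
    ring
  have hφD : cα ^ (-(1 / (2 - α))) = D := by
    rw [hcD, ← Real.rpow_mul hDpos.le,
      show (-(2 - α)) * (-(1 / (2 - α))) = 1 by field_simp, Real.rpow_one]
  -- the common threshold K
  set K : ℝ := (n : ℝ) / 2 * ((2 - α) * c) with hK
  have hsn : 0 < Real.sqrt n := Real.sqrt_pos.2 hnR
  have hsq : Real.sqrt n * Real.sqrt n = (n : ℝ) := Real.mul_self_sqrt hnR.le
  have hVe1pos : 0 < Vj ^ e1 := Real.rpow_pos_of_pos hVpos _
  have hV31 : Vj ^ e3 * Vj ^ e1 = 1 := by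
    rw [← Real.rpow_add hVpos, show e3 + e1 = 0 by rw [he1, he3]; ring, Real.rpow_zero]
  -- key2 : RHS ↔ |A| < K
  have key2 : ((Real.sqrt n)⁻¹ * Vj ^ e3 * |A| < φ) ↔ |A| < K := by
    have hpos : (0:ℝ) < Real.sqrt n * Vj ^ e1 := by positivity
    have e_l : (Real.sqrt n)⁻¹ * Vj ^ e3 * |A| * (Real.sqrt n * Vj ^ e1) = |A| := by
      have : (Real.sqrt n)⁻¹ * Vj ^ e3 * |A| * (Real.sqrt n * Vj ^ e1)
          = |A| * (((Real.sqrt n)⁻¹ * Real.sqrt n) * (Vj ^ e3 * Vj ^ e1)) := by ring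
      rw [this, inv_mul_cancel₀ hsn.ne', hV31, mul_one, mul_one]
    have e_r : φ * (Real.sqrt n * Vj ^ e1) = K := by
      rw [hφ, hφD]
      have : D * lam ^ e2 * Real.sqrt n * (Real.sqrt n * Vj ^ e1)
          = D * lam ^ e2 * (Real.sqrt n * Real.sqrt n) * Vj ^ e1 := by ring
      rw [this, hsq, hK, hCF, hD]
      ring
    constructor
    · intro hlt
      have := (mul_lt_mul_iff_of_pos_right hpos).mpr hlt
      rwa [e_l, e_r] at this
    · intro hlt
      rw [← e_l, ← e_r] at hlt
      exact (mul_lt_mul_iff_of_pos_right hpos).mp hlt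
  -- key1 : LHS ↔ |A| < K
  have h0 : h 0 = 0 := by
    rw [hh]; simp [Real.zero_rpow hα0.ne']
  have key1 : (∀ β : ℝ, β ≠ 0 → h 0 < h β) ↔ |A| < K := by
    constructor
    · intro H
      set β : ℝ := if 0 < A then T else -T with hβ
      have hβne : β ≠ 0 := by
        rw [hβ]; split
        · exact hTpos.ne'
        · exact (neg_ne_zero.mpr hTpos.ne')
      have hβsq : β ^ 2 = T ^ 2 := by rw [hβ]; split <;> ring
      have hβabs : |β| = T := by
        rw [hβ]; split
        · exact abs_of_pos hTpos
        · rw [abs_neg]; exact abs_of_pos hTpos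
      have hAβ : A * β = |A| * T := by
        rw [hβ]; split
        · rename_i hApos'; rw [abs_of_pos hApos']
        · rename_i hAneg'
          have : A < 0 := lt_of_le_of_ne (not_lt.mp hAneg') hAne
          rw [abs_of_neg this]; ring
      have hstep := H β hβne
      rw [h0, hh] at hstep
      have hTα : T ^ α = T ^ (α - 1) * T := by
        have := Real.rpow_add_one hTpos.ne' (α - 1)
        rw [show α - 1 + 1 = α by ring] at this
        exact this
      rw [hβsq, hβabs, mul_assoc, hAβ, hTα] at hstep
      -- hstep : 0 < Vj * T ^ 2 - 2 / n * (|A| * T) + lam * (T ^ (α-1) * T)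
      have hmain : 2 / (n:ℝ) * |A| < (2 - α) * c := by
        rw [← hval, ← mul_lt_mul_iff_of_pos_right hTpos]
        linarith [hstep]
      have h2n : (0:ℝ) < (n:ℝ) / 2 := by positivity
      have := mul_lt_mul_of_pos_left hmain h2n
      rw [hK]
      calc |A| = (n:ℝ) / 2 * (2 / (n:ℝ) * |A|) := by field_simp
        _ < (n:ℝ) / 2 * ((2 - α) * c) := this
    · intro hAK β hβne
      rw [h0, hh]
      have ht : 0 < |β| := abs_pos.mpr hβne
      have hm0 : 2 / (n:ℝ) * |A| < (2 - α) * c := by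
        have h2n : (0:ℝ) < 2 / (n:ℝ) := by positivity
        have := mul_lt_mul_of_pos_left hAK h2n
        calc 2 / (n:ℝ) * |A| < 2 / (n:ℝ) * K := this
          _ = (2 - α) * c := by rw [hK]; field_simp
      have hmain : 2 / (n:ℝ) * |A| < Vj * |β| + lam * |β| ^ (α - 1) :=
        lt_of_lt_of_le hm0 (hlow _ ht)
      have h7 : (2 / (n:ℝ) * |A|) * |β| < (Vj * |β| + lam * |β| ^ (α - 1)) * |β| :=
        mul_lt_mul_of_pos_right hmain ht
      have hβα : |β| ^ α = |β| ^ (α - 1) * |β| := by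
        have := Real.rpow_add_one ht.ne' (α - 1)
        rw [show α - 1 + 1 = α by ring] at this
        exact this
      have hβ2 : |β| * |β| = β ^ 2 := by rw [← sq_abs]; ring
      have h6 : 2 / (n:ℝ) * A * β ≤ 2 / (n:ℝ) * |A| * |β| := by
        rw [mul_assoc, mul_assoc]
        apply mul_le_mul_of_nonneg_left _ (by positivity : (0:ℝ) ≤ 2 / (n:ℝ))
        calc A * β ≤ |A * β| := le_abs_self _
          _ = |A| * |β| := abs_mul _ _
      have h8 : (2 / (n:ℝ) * |A|) * |β| < Vj * β ^ 2 + lam * |β| ^ α := by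
        calc (2 / (n:ℝ) * |A|) * |β| < (Vj * |β| + lam * |β| ^ (α - 1)) * |β| := h7
          _ = Vj * (|β| * |β|) + lam * (|β| ^ (α - 1) * |β|) := by ring
          _ = Vj * β ^ 2 + lam * |β| ^ α := by rw [hβ2, ← hβα]
      linarith [h8, h6]
  exact key1.trans key2.symm
end
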